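/- Let k be a field of characteristic zero and let A = A₀ ⊕ A₁ be a graded involutive algebra over k with involution τ. If A is simple (A ≠ 0 and the only τ-stable graded ideals of A are 0 and A), then A is either real (A₁ = 0) or complex (A₁ contains an invertible element of A). -/

import Mathlib

/-!
Lemma `inva1` of the paper: a simple graded involutive algebra is either real
(`A₁ = 0`) or complex (`A₁` contains an invertible element).
-/

/-- A (ℤ/2ℤ-)graded algebra over `k`. -/
structure GradedAlgebraStruct (k A : Type*) [CommSemiring k] [CommRing A] [Algebra k A] where
  deg : ZMod 2 → Submodule k A
  one_mem : (1 : A) ∈ deg 0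
  mul_mem : ∀ i j : ZMod 2, ∀ a ∈ deg i, ∀ b ∈ deg j, a * b ∈ deg (i + j)
  isCompl_deg : IsCompl (deg 0) (deg 1)

/-- A graded involutive algebra over `k`: a graded algebra with an involutive
`k`-algebra automorphism preserving the grading. -/
structure GradedInvAlgebraStruct (k A : Type*) [CommSemiring k] [CommRing A] [Algebra k A]
    extends GradedAlgebraStruct k A where
  τ : A ≃ₐ[k] A
  τ_invol : ∀ a : A, τ (τ a) = a
  τ_deg : ∀ i : ZMod 2, ∀ a ∈ deg i, τ a ∈ deg i

/-- An ideal `I` of `A` is graded if each element of `I` decomposes as a sum of its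
even and odd components, both lying in `I`. -/
def GradedAlgebraStruct.IsGradedIdeal {k A : Type*} [CommSemiring k] [CommRing A] [Algebra k A]
    (G : GradedAlgebraStruct k A) (I : Ideal A) : Prop :=
  ∀ x ∈ I, ∃ x₀ ∈ G.deg 0, ∃ x₁ ∈ G.deg 1, x₀ ∈ I ∧ x₁ ∈ I ∧ x = x₀ + x₁

/-- A graded involutive algebra is simple if it is non-zero and its only
τ-stable graded ideals are `0` and `A`. -/
def GradedInvAlgebraStruct.IsSimple {k A : Type*} [CommSemiring k] [CommRing A] [Algebra k A]
    (G : GradedInvAlgebraStruct k A) : Prop :=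
  Nontrivial A ∧ ∀ I : Ideal A, G.toGradedAlgebraStruct.IsGradedIdeal I →
    (∀ x : A, x ∈ I ↔ G.τ x ∈ I) → I = ⊥ ∨ I = ⊤

section Aux

theorem simple_aux {k A : Type*} [Field k] [CharZero k]
    [CommRing A] [Algebra k A] [FiniteDimensional k A] [IsSemisimpleRing A]
    (G : GradedInvAlgebraStruct k A) (hs : G.IsSimple)
    (h1 : G.deg 1 ≠ ⊥) : ∃ a ∈ G.deg 1, IsUnit a := by
  classical
  set I : Ideal A := Ideal.span (G.deg 1 : Set A) with hI
  -- decomposition of any element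
  have hdecomp : ∀ a : A, ∃ a₀ ∈ G.deg 0, ∃ a₁ ∈ G.deg 1, a = a₀ + a₁ := by
    intro a
    have : a ∈ G.deg 0 ⊔ G.deg 1 := by
      rw [G.isCompl_deg.sup_eq_top]; trivial
    obtain ⟨a₀, h₀, a₁, h₁, hsum⟩ := Submodule.mem_sup.mp this
    exact ⟨a₀, h₀, a₁, h₁, hsum.symm⟩
  have h11 : (1 + 1 : ZMod 2) = 0 := by decide
  have h10 : (1 + 0 : ZMod 2) = 1 := by decide
  -- I is graded
  have hgraded : G.toGradedAlgebraStruct.IsGradedIdeal I := by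
    intro x hx
    refine Submodule.span_induction ?_ ?_ ?_ ?_ hx
    · intro x hxm
      exact ⟨0, (G.deg 0).zero_mem, x, hxm, I.zero_mem, Ideal.subset_span hxm,
        (zero_add x).symm⟩
    · exact ⟨0, (G.deg 0).zero_mem, 0, (G.deg 1).zero_mem, I.zero_mem, I.zero_mem,
        (zero_add 0).symm⟩
    · rintro x y - - ⟨x₀, hx₀, x₁, hx₁, hx₀I, hx₁I, rfl⟩ ⟨y₀, hy₀, y₁, hy₁, hy₀I, hy₁I, rfl⟩
      exact ⟨x₀ + y₀, (G.deg 0).add_mem hx₀ hy₀, x₁ + y₁, (G.deg 1).add_mem hx₁ hy₁,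
        I.add_mem hx₀I hy₀I, I.add_mem hx₁I hy₁I, by ring⟩
    · rintro a x - ⟨x₀, hx₀, x₁, hx₁, hx₀I, hx₁I, rfl⟩
      obtain ⟨a₀, ha₀, a₁, ha₁, rfl⟩ := hdecomp a
      refine ⟨a₀ * x₀ + a₁ * x₁, ?_, a₀ * x₁ + a₁ * x₀, ?_, ?_, ?_, ?_⟩
      · refine (G.deg 0).add_mem ?_ ?_
        · simpa using G.mul_mem 0 0 a₀ ha₀ x₀ hx₀
        · simpa [h11] using G.mul_mem 1 1 a₁ ha₁ x₁ hx₁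
      · refine (G.deg 1).add_mem ?_ ?_
        · simpa using G.mul_mem 0 1 a₀ ha₀ x₁ hx₁
        · simpa [h10] using G.mul_mem 1 0 a₁ ha₁ x₀ hx₀
      · exact I.add_mem (I.mul_mem_left a₀ hx₀I) (I.mul_mem_left a₁ hx₁I)
      · exact I.add_mem (I.mul_mem_left a₀ hx₁I) (I.mul_mem_left a₁ hx₀I)
      · show (a₀ + a₁) * (x₀ + x₁) = _
        ring
  -- I is τ-stable
  have hτmem : ∀ x ∈ I, G.τ x ∈ I := by
    intro x hx
    refine Submodule.span_induction ?_ ?_ ?_ ?_ hx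
    · intro x hxm
      exact Ideal.subset_span (G.τ_deg 1 x hxm)
    · simpa using I.zero_mem
    · intro x y _ _ hx hy
      rw [map_add]; exact I.add_mem hx hy
    · intro a x _ hx
      show G.τ (a * x) ∈ I
      rw [map_mul]
      exact I.mul_mem_left _ hx
  have hτ : ∀ x : A, x ∈ I ↔ G.τ x ∈ I := by
    intro x
    refine ⟨hτmem x, fun h => ?_⟩
    have := hτmem _ h
    rwa [G.τ_invol] at this
  -- simplicity: I = ⊤
  have hItop : I = ⊤ := by
    rcases hs.2 I hgraded hτ with h | h
    · exfalso
      apply h1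
      rw [Submodule.eq_bot_iff]
      intro x hx
      have : x ∈ I := Ideal.subset_span hx
      rw [h] at this
      simpa using this
    · exact h
  -- maximal ideals and prime avoidance
  have : IsArtinian k A := inferInstance
  have hart : IsArtinianRing A := isArtinian_of_tower k inferInstance
  have hfin : Finite {m : Ideal A // m.IsMaximal} := by
    have := (IsArtinianRing.setOfPred_isMaximal_finite A).to_subtype
    exact this
  haveI : Infinite k := inferInstance
  -- subspaces of deg 1
  set E := G.deg 1
  have hp : ∀ m : {m : Ideal A // m.IsMaximal},
      (Submodule.comap E.subtype (Submodule.restrictScalars k m.1) : Subspace k E) ≠ ⊤ := by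
    rintro ⟨m, hm⟩ htop
    have hle : (G.deg 1 : Set A) ⊆ m := by
      intro x hx
      have : (⟨x, hx⟩ : E) ∈ (⊤ : Subspace k E) := trivial
      rw [← htop] at this
      exact this
    have : I ≤ m := Ideal.span_le.mpr hle
    rw [hItop] at this
    exact hm.ne_top (top_le_iff.mp this)
  have hcov : ⋃ m : {m : Ideal A // m.IsMaximal},
      ((Submodule.comap E.subtype (Submodule.restrictScalars k m.1) : Subspace k E) : Set E)
      ≠ Set.univ := by
    intro hcovers
    obtain ⟨m, hm⟩ := Subspace.exists_eq_top_of_iUnion_eq_univ hcovers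
    exact hp m hm
  obtain ⟨v, hv⟩ := Set.ne_univ_iff_exists_notMem _ |>.mp hcov
  simp only [Set.mem_iUnion, not_exists, SetLike.mem_coe] at hv
  refine ⟨(v : A), v.2, ?_⟩
  by_contra hu
  obtain ⟨m, hm, hvm⟩ := exists_max_ideal_of_mem_nonunits hu
  exact hv ⟨m, hm⟩ hvm

end Aux

theorem simple_gradedInvAlgebra_real_or_complex
    {k A : Type*} [Field k] [CharZero k]
    [CommRing A] [Algebra k A] [FiniteDimensional k A] [IsSemisimpleRing A]
    (G : GradedInvAlgebraStruct k A) (hs : G.IsSimple) :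
    G.deg 1 = ⊥ ∨ ∃ a ∈ G.deg 1, IsUnit a := by
  by_cases h : G.deg 1 = ⊥
  · exact Or.inl h
  · exact Or.inr (simple_aux G hs h)
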